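/- Let ν ∈ (−1,∞)^d and suppose the semigroup kernels T_t(x,y) on ((0,∞)^d, μ_ν) satisfy the upper Gaussian bound 0 ≤ T_t(x,y) ≤ C μ_ν(B(x,√t))^{-1} exp(−|x−y|²/(ct)) for x ∈ N(Q), y ∈ Q*, for cuboids Q of an admissible covering 𝒬. Then sup_{y ∈ Q*} ∫_{Q**} sup_{t > d_Q²} T_t(x,y) dμ_ν(x) ≤ C' for all Q ∈ 𝒬, with C' independent of Q. -/

import Mathlib

open MeasureTheory Set

/-- The measure on the positive orthant of `ℝ^d` with density `∏ x_i^(2ν_i+1) dx`. -/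
noncomputable def besselMeasureD (d : ℕ) (ν : Fin d → ℝ) :
    Measure (EuclideanSpace ℝ (Fin d)) :=
  (volume.restrict {x : EuclideanSpace ℝ (Fin d) | ∀ i, 0 < x i}).withDensity
    fun x => ENNReal.ofReal (∏ i, (x i) ^ (2 * ν i + 1))

/-- The cuboid with center `z` and axial radii `r`. -/
def cuboid (d : ℕ) (z r : Fin d → ℝ) : Set (EuclideanSpace ℝ (Fin d)) :=
  {x | ∀ i, |x i - z i| ≤ r i}

/-- The Euclidean diameter of a cuboid with axial radii `r`. -/
noncomputable def cuboidDiam (d : ℕ) (r : Fin d → ℝ) : ℝ :=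
  2 * Real.sqrt (∑ i, (r i) ^ 2)

open scoped ENNReal


/-- One-dimensional weighted interval measure. -/
noncomputable def Jm (p a b : ℝ) : ℝ≥0∞ :=
  ∫⁻ t in Set.Ioc (max a 0) (max b 0), ENNReal.ofReal (t ^ p)

lemma measurable_rpow_of (p : ℝ) : Measurable fun t : ℝ => ENNReal.ofReal (t ^ (p : ℝ)) := by
  measurability

lemma setLIntegral_Icc_inter_Ioi (p a b : ℝ) :
    ∫⁻ t in Set.Icc a b ∩ Set.Ioi 0, ENNReal.ofReal (t ^ p) = Jm p a b := by
  unfold Jm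
  rcases le_or_gt b 0 with hb | hb
  · rcases eq_or_lt_of_le hb with hb' | hb'
    · subst hb'
      rw [max_self]
      have h1 : Set.Icc a (0:ℝ) ∩ Set.Ioi 0 = ∅ := by
        ext t; simp only [mem_inter_iff, mem_Icc, mem_Ioi, mem_empty_iff_false, iff_false]
        rintro ⟨⟨_, h2⟩, h3⟩; linarith
      have h2 : Set.Ioc (max a 0) (0:ℝ) = ∅ := Set.Ioc_eq_empty (by simp)
      rw [h1, h2]
    · have h1 : Set.Icc a b ∩ Set.Ioi 0 = ∅ := by
        ext t; simp only [mem_inter_iff, mem_Icc, mem_Ioi, mem_empty_iff_false, iff_false]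
        rintro ⟨⟨_, h2⟩, h3⟩; linarith
      have h2 : Set.Ioc (max a 0) (max b 0) = ∅ := Set.Ioc_eq_empty (by
        simp only [not_lt, max_le_iff]
        exact ⟨le_max_of_le_right hb, le_max_right _ _⟩)
      rw [h1, h2]
  · have hbm : max b 0 = b := max_eq_left hb.le
    rw [hbm]
    rcases le_or_gt a 0 with ha | ha
    · have : Set.Icc a b ∩ Set.Ioi 0 = Set.Ioc (max a 0) b := by
        ext t
        simp only [mem_inter_iff, mem_Icc, mem_Ioi, mem_Ioc, max_eq_right ha, lt_iff_lt_of_le_iff_le]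
        constructor
        · rintro ⟨⟨_, h2⟩, h3⟩; exact ⟨h3, h2⟩
        · rintro ⟨h1, h2⟩; exact ⟨⟨by linarith, h2⟩, h1⟩
      rw [this]
    · have h1 : Set.Icc a b ∩ Set.Ioi 0 = Set.Icc a b := by
        apply Set.inter_eq_left.mpr
        intro t ht; exact lt_of_lt_of_le ha ht.1
      have ham : max a 0 = a := max_eq_left ha.le
      rw [h1, ham]
      exact (setLIntegral_congr (Ioc_ae_eq_Icc)).symm

lemma Jm_Ioc_zero (p : ℝ) (hp : -1 < p) (β : ℝ) (hβ : 0 ≤ β) :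
    ∫⁻ t in Set.Ioc 0 β, ENNReal.ofReal (t ^ p) = ENNReal.ofReal (β ^ (p + 1) / (p + 1)) := by
  rcases eq_or_lt_of_le hβ with hβ' | hβ'
  · subst hβ'
    rw [Set.Ioc_self, Real.zero_rpow (by linarith), Measure.restrict_empty, lintegral_zero_measure,
      zero_div, ENNReal.ofReal_zero]
  · have hint : IntegrableOn (fun t : ℝ => t ^ p) (Set.Ioc 0 β) volume :=
      (intervalIntegrable_iff_integrableOn_Ioc_of_le hβ).mp
        (intervalIntegral.intervalIntegrable_rpow' hp)
    rw [← ofReal_integral_eq_lintegral_ofReal hint ?pos]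
    case pos =>
      filter_upwards [ae_restrict_mem measurableSet_Ioc] with t ht
      exact Real.rpow_nonneg ht.1.le _
    congr 1
    rw [← intervalIntegral.integral_of_le hβ, integral_rpow (Or.inl hp),
      Real.zero_rpow (by linarith), sub_zero]

lemma Jm_le (p : ℝ) (hp : -1 < p) (a b : ℝ) :
    Jm p a b ≤ ENNReal.ofReal ((max b 0) ^ (p + 1) / (p + 1)) := by
  rw [← Jm_Ioc_zero p hp _ (le_max_right b 0)]
  exact lintegral_mono_set (Set.Ioc_subset_Ioc_left (le_max_right a 0))

lemma Jm_lt_top (p : ℝ) (hp : -1 < p) (a b : ℝ) : Jm p a b < ⊤ :=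
  lt_of_le_of_lt (Jm_le p hp a b) ENNReal.ofReal_lt_top

/-- lower bound for `t ^ p` on `(v/2, v]`. -/
lemma rpow_lower {p v t : ℝ} (hv : 0 < v) (ht1 : v / 2 < t) (ht2 : t ≤ v) :
    min 1 ((2:ℝ) ^ (-p)) * v ^ p ≤ t ^ p := by
  rcases le_or_gt 0 p with hp | hp
  · have h1 : min 1 ((2:ℝ) ^ (-p)) * v ^ p ≤ (2:ℝ) ^ (-p) * v ^ p :=
      mul_le_mul_of_nonneg_right (min_le_right _ _) (Real.rpow_nonneg hv.le _)
    have h2 : (2:ℝ) ^ (-p) * v ^ p = (v / 2) ^ p := by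
      rw [Real.div_rpow hv.le (by norm_num), Real.rpow_neg (by norm_num)]
      ring
    have h3 : (v / 2) ^ p ≤ t ^ p := Real.rpow_le_rpow (by linarith) ht1.le hp
    linarith
  · have h1 : min 1 ((2:ℝ) ^ (-p)) * v ^ p ≤ 1 * v ^ p :=
      mul_le_mul_of_nonneg_right (min_le_left _ _) (Real.rpow_nonneg hv.le _)
    have h3 : v ^ p ≤ t ^ p := Real.rpow_le_rpow_of_nonpos (by linarith) ht2 hp.le
    linarith

/-- upper bound for `t ^ p` on `(α, β]` when `β ≤ K * α`. -/
lemma rpow_upper {p α β t K : ℝ} (hα : 0 < α) (ht1 : α < t) (ht2 : t ≤ β) (hK : β ≤ K * α) :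
    t ^ p ≤ max 1 (K ^ p) * α ^ p := by
  have hKpos : 0 < K := by nlinarith
  rcases le_or_gt 0 p with hp | hp
  · have h1 : t ^ p ≤ (K * α) ^ p := Real.rpow_le_rpow (by linarith) (by linarith) hp
    rw [Real.mul_rpow hKpos.le hα.le] at h1
    have h2 : K ^ p * α ^ p ≤ max 1 (K ^ p) * α ^ p :=
      mul_le_mul_of_nonneg_right (le_max_right _ _) (Real.rpow_nonneg hα.le _)
    linarith
  · have h1 : t ^ p ≤ α ^ p := Real.rpow_le_rpow_of_nonpos hα ht1.le hp.le
    have h2 : 1 * α ^ p ≤ max 1 (K ^ p) * α ^ p :=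
      mul_le_mul_of_nonneg_right (le_max_left _ _) (Real.rpow_nonneg hα.le _)
    linarith

/-- `a ^ p ≤ c₂ v ^ p` when `a ≤ v ≤ K a`. -/
lemma rpow_comparable {p a v K : ℝ} (ha : 0 < a) (h1 : a ≤ v) (h2 : v ≤ K * a) :
    a ^ p ≤ max 1 (K ^ (-p)) * v ^ p := by
  have hKpos : 0 < K := by nlinarith
  rcases le_or_gt 0 p with hp | hp
  · have := Real.rpow_le_rpow ha.le h1 hp
    have h3 : 1 * v ^ p ≤ max 1 (K ^ (-p)) * v ^ p :=
      mul_le_mul_of_nonneg_right (le_max_left _ _) (Real.rpow_nonneg (by linarith) _)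
    linarith
  · have hv : 0 < v := lt_of_lt_of_le ha h1
    have h3 : (K * a) ^ p ≤ v ^ p := Real.rpow_le_rpow_of_nonpos hv h2 hp.le
    rw [Real.mul_rpow hKpos.le ha.le] at h3
    have h4 : a ^ p = K ^ (-p) * (K ^ p * a ^ p) := by
      rw [Real.rpow_neg hKpos.le, ← mul_assoc, inv_mul_cancel₀ (by positivity), one_mul]
    have h5 : K ^ (-p) * (K ^ p * a ^ p) ≤ K ^ (-p) * v ^ p :=
      mul_le_mul_of_nonneg_left h3 (Real.rpow_nonneg hKpos.le _)
    have h6 : K ^ (-p) * v ^ p ≤ max 1 (K ^ (-p)) * v ^ p :=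
      mul_le_mul_of_nonneg_right (le_max_right _ _) (Real.rpow_nonneg hv.le _)
    linarith

/-- `v ^ p ≥ c₃ R ^ p` when `δ R ≤ v ≤ K R`. -/
lemma rpow_between {p v R δ K : ℝ} (hR : 0 < R) (hδ : 0 < δ) (h1 : δ * R ≤ v) (h2 : v ≤ K * R) :
    min (δ ^ p) (K ^ p) * R ^ p ≤ v ^ p := by
  have hv : 0 < v := lt_of_lt_of_le (by positivity) h1
  have hK : 0 < K := by nlinarith
  rcases le_or_gt 0 p with hp | hp
  · have h3 : (δ * R) ^ p ≤ v ^ p := Real.rpow_le_rpow (by positivity) h1 hp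
    rw [Real.mul_rpow hδ.le hR.le] at h3
    have h4 : min (δ ^ p) (K ^ p) * R ^ p ≤ δ ^ p * R ^ p :=
      mul_le_mul_of_nonneg_right (min_le_left _ _) (Real.rpow_nonneg hR.le _)
    linarith
  · have h3 : (K * R) ^ p ≤ v ^ p := Real.rpow_le_rpow_of_nonpos hv h2 hp.le
    rw [Real.mul_rpow hK.le hR.le] at h3
    have h4 : min (δ ^ p) (K ^ p) * R ^ p ≤ K ^ p * R ^ p :=
      mul_le_mul_of_nonneg_right (min_le_right _ _) (Real.rpow_nonneg hR.le _)
    linarith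

/-- Lower bound on `Jm p (x-s) (x+s)`. -/
lemma Jm_lower {p x s : ℝ} (hx : 0 ≤ x) (hs : 0 < s) :
    ENNReal.ofReal (min 1 ((2:ℝ) ^ (-p)) * (x + s) ^ p * (s / 2)) ≤ Jm p (x - s) (x + s) := by
  have hv : 0 < x + s := by linarith
  have hmax : max (x + s) 0 = x + s := max_eq_left hv.le
  have hsub : Set.Ioc (x + s / 2) (x + s) ⊆ Set.Ioc (max (x - s) 0) (max (x + s) 0) := by
    rw [hmax]
    apply Set.Ioc_subset_Ioc_left
    exact max_le (by linarith) (by linarith)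
  calc ENNReal.ofReal (min 1 ((2:ℝ) ^ (-p)) * (x + s) ^ p * (s / 2))
      = ENNReal.ofReal (min 1 ((2:ℝ) ^ (-p)) * (x + s) ^ p) * volume (Set.Ioc (x + s / 2) (x + s)) := by
        rw [Real.volume_Ioc, show x + s - (x + s / 2) = s / 2 by ring,
          ← ENNReal.ofReal_mul (by positivity)]
    _ = ∫⁻ _ in Set.Ioc (x + s / 2) (x + s), ENNReal.ofReal (min 1 ((2:ℝ) ^ (-p)) * (x + s) ^ p) := by
        rw [setLIntegral_const]
    _ ≤ ∫⁻ t in Set.Ioc (x + s / 2) (x + s), ENNReal.ofReal (t ^ p) := by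
        apply setLIntegral_mono (measurable_rpow_of p)
        intro t ht
        exact ENNReal.ofReal_le_ofReal (rpow_lower hv (by rcases ht with ⟨h1, _⟩; linarith)
          ht.2)
    _ ≤ Jm p (x - s) (x + s) := lintegral_mono_set hsub

noncomputable def Acoord (p δ Δ : ℝ) : ℝ :=
  max (4 * (max 1 ((3:ℝ) ^ p)) * (max 1 ((3 + Δ) ^ (-p))) / (min 1 ((2:ℝ) ^ (-p)) * δ))
    (2 * (3:ℝ) ^ (p + 1) / ((p + 1) * min 1 ((2:ℝ) ^ (-p)) * min (δ ^ p) ((3 + Δ) ^ p) * δ))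

lemma Acoord_pos {p δ Δ : ℝ} (hp : -1 < p) (hδ : 0 < δ) (hΔ : 0 ≤ Δ) : 0 < Acoord p δ Δ := by
  apply lt_max_of_lt_left
  have h1 : (0:ℝ) < min 1 ((2:ℝ) ^ (-p)) := lt_min one_pos (Real.rpow_pos_of_pos two_pos _)
  have h2 : (0:ℝ) < max 1 ((3:ℝ) ^ p) := lt_max_of_lt_left one_pos
  have h3 : (0:ℝ) < max 1 ((3 + Δ) ^ (-p)) := lt_max_of_lt_left one_pos
  positivity

/-- The key one-dimensional doubling estimate. -/
lemma Jm_coord {p δ Δ R z x s : ℝ} (hp : -1 < p) (hδ : 0 < δ) (hΔ : 0 ≤ Δ) (hR : 0 < R)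
    (hz : 0 ≤ z) (hx0 : 0 ≤ x) (hx1 : z - R ≤ x) (hx2 : x ≤ z + R)
    (hs1 : δ * R ≤ s) (hs2 : s ≤ Δ * R) :
    Jm p (z - R) (z + R) ≤ ENNReal.ofReal (Acoord p δ Δ) * Jm p (x - s) (x + s) := by
  have hs : 0 < s := lt_of_lt_of_le (by positivity) hs1
  set c₀ := min 1 ((2:ℝ) ^ (-p)) with hc₀
  have hc₀pos : 0 < c₀ := lt_min one_pos (Real.rpow_pos_of_pos two_pos _)
  set v := x + s with hv
  have hvpos : 0 < v := by simp only [hv]; linarith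
  have hL : ENNReal.ofReal (c₀ * v ^ p * (s / 2)) ≤ Jm p (x - s) (x + s) := Jm_lower hx0 hs
  have hq : 0 < p + 1 := by linarith
  -- suffices to bound LHS by ofReal (Acoord * (c₀ * v^p * (s/2)))
  have key : Jm p (z - R) (z + R) ≤ ENNReal.ofReal (Acoord p δ Δ * (c₀ * v ^ p * (s / 2))) := by
    have hbmax : max (z + R) 0 = z + R := max_eq_left (by linarith)
    rcases le_or_gt R (z - R) with hcase | hcase
    · -- far from the origin
      have hapos : 0 < z - R := lt_of_lt_of_le hR hcase
      have hamax : max (z - R) 0 = z - R := max_eq_left hapos.le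
      set c₁ := max 1 ((3:ℝ) ^ p) with hc₁
      set c₂ := max 1 ((3 + Δ) ^ (-p)) with hc₂
      have hc₁pos : 0 < c₁ := lt_max_of_lt_left one_pos
      have hc₂pos : 0 < c₂ := lt_max_of_lt_left one_pos
      have hupper : Jm p (z - R) (z + R) ≤ ENNReal.ofReal (c₁ * (z - R) ^ p * (2 * R)) := by
        unfold Jm
        rw [hamax, hbmax]
        calc ∫⁻ t in Set.Ioc (z - R) (z + R), ENNReal.ofReal (t ^ p)
            ≤ ∫⁻ _ in Set.Ioc (z - R) (z + R), ENNReal.ofReal (c₁ * (z - R) ^ p) := by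
              apply setLIntegral_mono (by measurability)
              intro t ht
              apply ENNReal.ofReal_le_ofReal
              exact rpow_upper hapos ht.1 ht.2 (by linarith)
          _ = ENNReal.ofReal (c₁ * (z - R) ^ p) * volume (Set.Ioc (z - R) (z + R)) := setLIntegral_const _ _
          _ ≤ ENNReal.ofReal (c₁ * (z - R) ^ p * (2 * R)) := by
              rw [Real.volume_Ioc, ← ENNReal.ofReal_mul (by positivity)]
              apply ENNReal.ofReal_le_ofReal
              have : z + R - (z - R) = 2 * R := by ring
              rw [this]
      refine hupper.trans (ENNReal.ofReal_le_ofReal ?_)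
      -- real inequality
      have hav : z - R ≤ v := by simp only [hv]; linarith
      have havK : v ≤ (3 + Δ) * (z - R) := by
        have h1 : z + R ≤ 3 * (z - R) := by linarith
        have h2 : s ≤ Δ * (z - R) := le_trans hs2 (by nlinarith)
        simp only [hv]; nlinarith
      have hcomp : (z - R) ^ p ≤ c₂ * v ^ p := rpow_comparable hapos hav havK
      have hA1 : 4 * c₁ * c₂ / (c₀ * δ) ≤ Acoord p δ Δ := le_max_left _ _
      have hvp : 0 ≤ v ^ p := Real.rpow_nonneg hvpos.le _
      have hRs : R ≤ s / δ := by rw [le_div_iff₀ hδ]; linarith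
      calc c₁ * (z - R) ^ p * (2 * R)
          ≤ c₁ * (c₂ * v ^ p) * (2 * (s / δ)) := by
            apply mul_le_mul (mul_le_mul_of_nonneg_left hcomp hc₁pos.le) (by linarith)
              (by positivity) (by positivity)
        _ = (4 * c₁ * c₂ / (c₀ * δ)) * (c₀ * v ^ p * (s / 2)) := by
            field_simp; ring
        _ ≤ Acoord p δ Δ * (c₀ * v ^ p * (s / 2)) := by
            apply mul_le_mul_of_nonneg_right hA1 (by positivity)
    · -- near the origin : z - R < R, so z + R < 3R
      have hb3 : z + R < 3 * R := by linarith
      set c₃ := min (δ ^ p) ((3 + Δ) ^ p) with hc₃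
      have hc₃pos : 0 < c₃ := lt_min (Real.rpow_pos_of_pos hδ _) (Real.rpow_pos_of_pos (by linarith) _)
      have hupper : Jm p (z - R) (z + R) ≤ ENNReal.ofReal ((3 * R) ^ (p + 1) / (p + 1)) := by
        unfold Jm
        rw [hbmax]
        calc ∫⁻ t in Set.Ioc (max (z - R) 0) (z + R), ENNReal.ofReal (t ^ p)
            ≤ ∫⁻ t in Set.Ioc 0 (3 * R), ENNReal.ofReal (t ^ p) := by
              apply lintegral_mono_set
              apply Set.Ioc_subset_Ioc (le_max_right _ _) (by linarith)
          _ = ENNReal.ofReal ((3 * R) ^ (p + 1) / (p + 1)) := Jm_Ioc_zero p hp _ (by positivity)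
      refine hupper.trans (ENNReal.ofReal_le_ofReal ?_)
      have hvK : v ≤ (3 + Δ) * R := by simp only [hv]; nlinarith
      have hvδ : δ * R ≤ v := by simp only [hv]; linarith
      have hbet : c₃ * R ^ p ≤ v ^ p := rpow_between hR hδ hvδ hvK
      have hA2 : 2 * (3:ℝ) ^ (p + 1) / ((p + 1) * c₀ * c₃ * δ) ≤ Acoord p δ Δ := le_max_right _ _
      have hRp : (0:ℝ) < R ^ p := Real.rpow_pos_of_pos hR _
      have h3q : (0:ℝ) < (3:ℝ) ^ (p + 1) := Real.rpow_pos_of_pos (by norm_num) _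
      have hRq : (3 * R) ^ (p + 1) = 3 ^ (p + 1) * (R ^ p * R) := by
        rw [Real.mul_rpow (by norm_num) hR.le]
        congr 1
        rw [← Real.rpow_add_one (ne_of_gt hR) p]
      calc (3 * R) ^ (p + 1) / (p + 1)
          = (2 * (3:ℝ) ^ (p + 1) / ((p + 1) * c₀ * c₃ * δ)) * (c₀ * (c₃ * R ^ p) * (δ * R / 2)) := by
            rw [hRq]; field_simp
        _ ≤ (2 * (3:ℝ) ^ (p + 1) / ((p + 1) * c₀ * c₃ * δ)) * (c₀ * v ^ p * (s / 2)) := by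
            apply mul_le_mul_of_nonneg_left ?_ (by positivity)
            apply mul_le_mul ?_ (by linarith) (by positivity) (by positivity)
            exact mul_le_mul_of_nonneg_left hbet hc₀pos.le
        _ ≤ Acoord p δ Δ * (c₀ * v ^ p * (s / 2)) := by
            apply mul_le_mul_of_nonneg_right hA2 (by positivity)
  refine key.trans ?_
  rw [ENNReal.ofReal_mul (Acoord_pos hp hδ hΔ).le]
  exact mul_le_mul_of_nonneg_left hL (by positivity)

/-- Product lintegral over a finite pi type. -/
lemma lintegral_pi_prod {d : ℕ} (g : Fin d → ℝ → ℝ≥0∞) (hg : ∀ i, Measurable (g i)) :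
    ∫⁻ y : Fin d → ℝ, ∏ i, g i (y i) ∂(Measure.pi fun _ => (volume : Measure ℝ))
      = ∏ i, ∫⁻ t, g i t ∂volume := by
  have hmeas : Measurable fun y : Fin d → ℝ => ∏ i, g i (y i) :=
    Finset.measurable_prod _ fun i _ => (hg i).comp (measurable_pi_apply i)
  have main : ∀ s : Finset (Fin d), ∀ x : Fin d → ℝ,
      (∫⋯∫⁻_s, (fun y => ∏ i, g i (y i)) ∂(fun _ => (volume : Measure ℝ))) x
        = (∏ i ∈ s, ∫⁻ t, g i t ∂volume) * ∏ i ∈ sᶜ, g i (x i) := by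
    intro s
    induction s using Finset.induction_on with
    | empty => intro x; simp
    | insert j s' hi ih =>
      intro x
      rw [MeasureTheory.lmarginal_insert _ hmeas hi]
      have step : ∀ xj : ℝ,
          (∫⋯∫⁻_s', (fun y => ∏ i, g i (y i)) ∂(fun _ => (volume : Measure ℝ)))
            (Function.update x j xj)
          = ((∏ i ∈ s', ∫⁻ t, g i t ∂volume) * ∏ i ∈ s'ᶜ \ {j}, g i (x i)) * g j xj := by
        intro xj
        rw [ih]
        have hjs' : j ∈ s'ᶜ := Finset.mem_compl.mpr hi
        rw [← Finset.prod_erase_mul _ _ hjs']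
        have : ∀ i ∈ s'ᶜ.erase j, g i (Function.update x j xj i) = g i (x i) := by
          intro i hi'
          rw [Function.update_of_ne (Finset.ne_of_mem_erase hi')]
        rw [Finset.prod_congr rfl this, Function.update_self, Finset.erase_eq]
        ring
      simp_rw [step]
      rw [lintegral_const_mul _ (hg j)]
      rw [Finset.prod_insert hi]
      have : (insert j s')ᶜ = s'ᶜ \ {j} := by
        rw [Finset.compl_insert, Finset.erase_eq]
      rw [this]
      ring
  have := main Finset.univ (fun _ => 0)
  rw [MeasureTheory.lmarginal_univ] at this
  simpa using this

lemma measurableSet_orthant (d : ℕ) :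
    MeasurableSet {x : EuclideanSpace ℝ (Fin d) | ∀ i, 0 < x i} := by
  have : {x : EuclideanSpace ℝ (Fin d) | ∀ i, 0 < x i}
      = ⋂ i, {x : EuclideanSpace ℝ (Fin d) | 0 < x i} := by ext x; simp
  rw [this]
  exact MeasurableSet.iInter fun i =>
    measurableSet_lt measurable_const (by measurability)

lemma measurableSet_cuboid (d : ℕ) (z r : Fin d → ℝ) : MeasurableSet (cuboid d z r) := by
  have : cuboid d z r = ⋂ i, {x : EuclideanSpace ℝ (Fin d) | |x i - z i| ≤ r i} := by
    ext x; simp [cuboid]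
  rw [this]
  refine MeasurableSet.iInter fun i => ?_
  have : Measurable fun x : EuclideanSpace ℝ (Fin d) => |x i - z i| := by measurability
  exact measurableSet_le this measurable_const

/-- The measure of a cuboid. -/
lemma besselMeasureD_cuboid (d : ℕ) (ν : Fin d → ℝ) (z ρ : Fin d → ℝ) :
    besselMeasureD d ν (cuboid d z ρ)
      = ∏ i, Jm (2 * ν i + 1) (z i - ρ i) (z i + ρ i) := by
  classical
  set P : Set (EuclideanSpace ℝ (Fin d)) := {x | ∀ i, 0 < x i} with hPdef
  have hP : MeasurableSet P := measurableSet_orthant d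
  have hS : MeasurableSet (cuboid d z ρ) := measurableSet_cuboid d z ρ
  rw [besselMeasureD, withDensity_apply _ hS, Measure.restrict_restrict hS]
  rw [← lintegral_indicator (hS.inter hP) _]
  have hvol : (volume : Measure (EuclideanSpace ℝ (Fin d)))
      = Measure.map (MeasurableEquiv.toLp 2 (Fin d → ℝ)).symm.symm volume :=
    ((EuclideanSpace.volume_preserving_symm_measurableEquiv_toLp (Fin d)).symm).map_eq.symm
  rw [hvol]
  rw [show ⇑(MeasurableEquiv.toLp 2 (Fin d → ℝ)).symm.symm
      = ⇑((MeasurableEquiv.toLp 2 (Fin d → ℝ)).symm.symm : (Fin d → ℝ) ≃ᵐ EuclideanSpace ℝ (Fin d))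
      from rfl]
  rw [MeasureTheory.lintegral_map_equiv
    (fun x => Set.indicator (cuboid d z ρ ∩ P)
      (fun x => ENNReal.ofReal (∏ i, (x i) ^ (2 * ν i + 1))) x)
    ((MeasurableEquiv.toLp 2 (Fin d → ℝ)).symm.symm)]
  have hpoint : ∀ y : Fin d → ℝ,
      Set.indicator (cuboid d z ρ ∩ P)
        (fun x => ENNReal.ofReal (∏ i, (x i) ^ (2 * ν i + 1)))
        ((MeasurableEquiv.toLp 2 (Fin d → ℝ)).symm.symm y)
      = ∏ i, Set.indicator (Set.Icc (z i - ρ i) (z i + ρ i) ∩ Set.Ioi 0)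
          (fun t => ENNReal.ofReal (t ^ (2 * ν i + 1))) (y i) := by
    intro y
    have hcoord : ∀ i, ((MeasurableEquiv.toLp 2 (Fin d → ℝ)).symm.symm y) i = y i := fun i => rfl
    by_cases h : ∀ i, y i ∈ Set.Icc (z i - ρ i) (z i + ρ i) ∩ Set.Ioi 0
    · have hmem : (MeasurableEquiv.toLp 2 (Fin d → ℝ)).symm.symm y ∈ cuboid d z ρ ∩ P := by
        constructor
        · intro i
          rw [hcoord i, abs_le]
          have := (h i).1
          rw [Set.mem_Icc] at this
          constructor <;> linarith [this.1, this.2]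
        · intro i
          rw [hcoord i]
          exact (h i).2
      rw [Set.indicator_of_mem hmem]
      have : (∏ i, ((MeasurableEquiv.toLp 2 (Fin d → ℝ)).symm.symm y i) ^ (2 * ν i + 1))
          = ∏ i, (y i) ^ (2 * ν i + 1) := by
        apply Finset.prod_congr rfl; intro i _; rw [hcoord i]
      rw [this, ENNReal.ofReal_prod_of_nonneg (fun i _ => Real.rpow_nonneg (le_of_lt (h i).2) _)]
      apply Finset.prod_congr rfl
      intro i _
      rw [Set.indicator_of_mem (h i)]
    · push_neg at h
      obtain ⟨i, hi⟩ := h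
      have hnmem : (MeasurableEquiv.toLp 2 (Fin d → ℝ)).symm.symm y ∉ cuboid d z ρ ∩ P := by
        rintro ⟨h1, h2⟩
        apply hi
        constructor
        · have := h1 i
          rw [hcoord i, abs_le] at this
          rw [Set.mem_Icc]
          constructor <;> linarith [this.1, this.2]
        · have := h2 i
          rwa [hcoord i] at this
      rw [Set.indicator_of_notMem hnmem]
      symm
      apply Finset.prod_eq_zero (Finset.mem_univ i)
      rw [Set.indicator_of_notMem hi]
  simp_rw [hpoint]
  rw [show (volume : Measure (Fin d → ℝ)) = Measure.pi fun _ => (volume : Measure ℝ) from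
    MeasureTheory.volume_pi]
  rw [lintegral_pi_prod _ (fun i => (Measurable.indicator (by measurability)
    ((measurableSet_Icc).inter measurableSet_Ioi)))]
  apply Finset.prod_congr rfl
  intro i _
  rw [lintegral_indicator ((measurableSet_Icc).inter measurableSet_Ioi) _]
  exact setLIntegral_Icc_inter_Ioi _ _ _

lemma cuboid_subset_ball {d : ℕ} (x : EuclideanSpace ℝ (Fin d)) {s ρ : ℝ} (hs : 0 ≤ s)
    (h : Real.sqrt d * s < ρ) : cuboid d x (fun _ => s) ⊆ Metric.ball x ρ := by
  intro y hy
  rw [Metric.mem_ball, EuclideanSpace.dist_eq]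
  have hb : ∀ i, dist (y i) (x i) ^ 2 ≤ s ^ 2 := by
    intro i
    rw [Real.dist_eq]
    exact sq_le_sq' (by linarith [(hy i), abs_nonneg (y i - x i)]) (hy i)
  calc Real.sqrt (∑ i, dist (y i) (x i) ^ 2) ≤ Real.sqrt (∑ _i : Fin d, s ^ 2) :=
        Real.sqrt_le_sqrt (Finset.sum_le_sum fun i _ => hb i)
    _ = Real.sqrt d * s := by
        rw [Finset.sum_const, Finset.card_univ, Fintype.card_fin, nsmul_eq_mul,
          Real.sqrt_mul (by positivity), Real.sqrt_sq hs]
    _ < ρ := h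

lemma ball_subset_cuboid {d : ℕ} (x : EuclideanSpace ℝ (Fin d)) (ρ : ℝ) :
    Metric.ball x ρ ⊆ cuboid d x (fun _ => ρ) := by
  intro y hy i
  rw [Metric.mem_ball, EuclideanSpace.dist_eq] at hy
  have h1 : |y i - x i| = Real.sqrt (dist (y i) (x i) ^ 2) := by
    rw [Real.sqrt_sq_eq_abs, Real.dist_eq, abs_abs]
  rw [h1]
  calc Real.sqrt (dist (y i) (x i) ^ 2) ≤ Real.sqrt (∑ j, dist (y j) (x j) ^ 2) :=
        Real.sqrt_le_sqrt (Finset.single_le_sum (f := fun j => dist (y j) (x j) ^ 2) (fun j _ => sq_nonneg _) (Finset.mem_univ i))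
    _ ≤ ρ := le_of_lt hy

theorem lintegral_sup_large_time_bound (d : ℕ) (ν : Fin d → ℝ) (hν : ∀ i, -1 < ν i)
    (C c C₁ κ : ℝ) (hC : 0 < C) (hc : 0 < c) (hC₁ : 1 ≤ C₁) (hκ : 1 < κ) :
    ∃ C' : ℝ, 0 < C' ∧
      ∀ (T : ℝ → EuclideanSpace ℝ (Fin d) → EuclideanSpace ℝ (Fin d) → ℝ)
        (z r : Fin d → ℝ),
        (∀ i, 0 < r i) → (∀ i, 0 ≤ z i - r i) → (∀ i j, r i ≤ C₁ * r j) →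
        (∀ t : ℝ, 0 < t → ∀ x ∈ cuboid d z (fun i => κ^2 * r i),
          ∀ y ∈ cuboid d z (fun i => κ * r i),
            0 ≤ T t x y ∧
            T t x y ≤ C * (besselMeasureD d ν (Metric.ball x (Real.sqrt t))).toReal⁻¹ *
              Real.exp (-(dist x y)^2 / (c * t))) →
        ∀ y ∈ cuboid d z (fun i => κ * r i),
          (∫⁻ x in cuboid d z (fun i => κ^2 * r i),
              ⨆ (t : ℝ) (_ : (cuboidDiam d r)^2 < t), ENNReal.ofReal (T t x y)
            ∂(besselMeasureD d ν))
          ≤ ENNReal.ofReal C' := by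
  have hκ0 : (0:ℝ) < κ := by linarith
  rcases Nat.eq_zero_or_pos d with hd0 | hdpos
  · -- degenerate zero-dimensional case
    subst hd0
    refine ⟨C, hC, ?_⟩
    intro T z r hr hzr hrr hT y hy
    have hsub : ∀ a b : EuclideanSpace ℝ (Fin 0), a = b := fun a b => PiLp.ext fun i => i.elim0
    have hμ : besselMeasureD 0 ν = volume := by
      rw [besselMeasureD]
      have h1 : {x : EuclideanSpace ℝ (Fin 0) | ∀ i, 0 < x i} = Set.univ := by
        ext x; simp only [Set.mem_setOf_eq, Set.mem_univ, iff_true]; intro i; exact i.elim0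
      have h2 : (fun x : EuclideanSpace ℝ (Fin 0) =>
          ENNReal.ofReal (∏ i, (x i) ^ (2 * ν i + 1)))
          = (1 : EuclideanSpace ℝ (Fin 0) → ℝ≥0∞) := by
        funext x; simp
      rw [h1, h2, Measure.restrict_univ, withDensity_one]
    have hvol1 : (volume : Measure (EuclideanSpace ℝ (Fin 0))) Set.univ = 1 := by
      rw [volume_euclideanSpace_eq_dirac]
      simp
    have hdQ : cuboidDiam 0 r = 0 := by simp [cuboidDiam]
    have hpt : ∀ x ∈ cuboid 0 z (fun i => κ^2 * r i),
        (⨆ (t : ℝ) (_ : (cuboidDiam 0 r)^2 < t), ENNReal.ofReal (T t x y))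
          ≤ ENNReal.ofReal C := by
      intro x hx
      refine iSup₂_le fun t ht => ?_
      rw [hdQ] at ht
      have htpos : 0 < t := by nlinarith
      obtain ⟨h0, hb⟩ := hT t htpos x hx y hy
      have hball : Metric.ball x (Real.sqrt t) = Set.univ := by
        apply Set.eq_univ_of_forall
        intro w
        rw [Metric.mem_ball, hsub w x, dist_self]
        exact Real.sqrt_pos.mpr htpos
      have hbm : (besselMeasureD 0 ν (Metric.ball x (Real.sqrt t))).toReal = 1 := by
        rw [hball, hμ, hvol1]; simp
      rw [hbm] at hb
      have hexp : Real.exp (-(dist x y)^2 / (c * t)) ≤ 1 := by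
        rw [Real.exp_le_one_iff]
        apply div_nonpos_of_nonpos_of_nonneg (neg_nonpos.mpr (sq_nonneg _)) (by positivity)
      apply ENNReal.ofReal_le_ofReal
      calc T t x y ≤ C * 1⁻¹ * Real.exp (-(dist x y)^2 / (c * t)) := hb
        _ = C * Real.exp (-(dist x y)^2 / (c * t)) := by ring
        _ ≤ C * 1 := mul_le_mul_of_nonneg_left hexp hC.le
        _ = C := mul_one C
    calc (∫⁻ x in cuboid 0 z (fun i => κ^2 * r i),
            ⨆ (t : ℝ) (_ : (cuboidDiam 0 r)^2 < t), ENNReal.ofReal (T t x y)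
          ∂(besselMeasureD 0 ν))
        ≤ ∫⁻ _x in cuboid 0 z (fun i => κ^2 * r i), ENNReal.ofReal C ∂(besselMeasureD 0 ν) := by
          apply lintegral_mono_ae
          filter_upwards [ae_restrict_mem (measurableSet_cuboid 0 z _)] with x hx
          exact hpt x hx
      _ = ENNReal.ofReal C * besselMeasureD 0 ν (cuboid 0 z (fun i => κ^2 * r i)) :=
          setLIntegral_const _ _
      _ ≤ ENNReal.ofReal C * 1 := by
          apply mul_le_mul_right
          rw [hμ, ← hvol1]
          exact measure_mono (Set.subset_univ _)
      _ = ENNReal.ofReal C := mul_one _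
  · -- main case d ≥ 1
    have hdR : (0:ℝ) < d := by exact_mod_cast hdpos
    have hsd : 0 < Real.sqrt d := Real.sqrt_pos.mpr hdR
    set δ : ℝ := 1 / (κ^2 * Real.sqrt d) with hδdef
    set Δ : ℝ := C₁ / κ^2 with hΔdef
    have hδ : 0 < δ := by positivity
    have hΔ0 : 0 ≤ Δ := by positivity
    have hp : ∀ i : Fin d, -1 < 2 * ν i + 1 := fun i => by linarith [hν i]
    set A : ℝ := ∏ i : Fin d, Acoord (2 * ν i + 1) δ Δ with hAdef
    have hApos : 0 < A := Finset.prod_pos fun i _ => Acoord_pos (hp i) hδ hΔ0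
    refine ⟨C * A, by positivity, ?_⟩
    intro T z r hr hzr hrr hT y hy
    set R : Fin d → ℝ := fun i => κ^2 * r i with hRdef
    have hRpos : ∀ i, 0 < R i := fun i => by have := hr i; positivity
    have hzpos : ∀ i, 0 < z i := fun i => by have h1 := hzr i; have h2 := hr i; linarith
    set dQ : ℝ := cuboidDiam d r with hdQdef
    have hsum_pos : 0 < ∑ i, (r i)^2 := by
      apply Finset.sum_pos (fun i _ => by have := hr i; positivity)
      exact ⟨⟨0, hdpos⟩, Finset.mem_univ _⟩
    have hdQpos : 0 < dQ := by
      rw [hdQdef, cuboidDiam]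
      have := Real.sqrt_pos.mpr hsum_pos
      linarith
    set s : ℝ := dQ / (2 * Real.sqrt d) with hsdef
    have hspos : 0 < s := by positivity
    have hs1 : ∀ i, δ * R i ≤ s := by
      intro i
      have h1 : r i ≤ Real.sqrt (∑ j, (r j)^2) := by
        rw [show r i = Real.sqrt ((r i)^2) from (Real.sqrt_sq (hr i).le).symm]
        exact Real.sqrt_le_sqrt (Finset.single_le_sum (f := fun j => (r j) ^ 2) (fun j _ => sq_nonneg _) (Finset.mem_univ i))
      have h2 : δ * R i = r i / Real.sqrt d := by
        rw [hδdef, hRdef]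
        field_simp
      rw [h2, hsdef, hdQdef, cuboidDiam]
      rw [div_le_div_iff₀ hsd (by positivity)]
      calc r i * (2 * Real.sqrt d) ≤ Real.sqrt (∑ j, (r j)^2) * (2 * Real.sqrt d) := by
            apply mul_le_mul_of_nonneg_right h1 (by positivity)
        _ = 2 * Real.sqrt (∑ j, (r j)^2) * Real.sqrt d := by ring
    have hs2 : ∀ i, s ≤ Δ * R i := by
      intro i
      have h1 : Real.sqrt (∑ j, (r j)^2) ≤ Real.sqrt d * (C₁ * r i) := by
        rw [show Real.sqrt d * (C₁ * r i) = Real.sqrt d * Real.sqrt ((C₁ * r i)^2) by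
          rw [Real.sqrt_sq (by have := hr i; positivity)], ← Real.sqrt_mul hdR.le]
        apply Real.sqrt_le_sqrt
        calc ∑ j, (r j)^2 ≤ ∑ _j : Fin d, (C₁ * r i)^2 := by
              apply Finset.sum_le_sum
              intro j _
              have h3 := hrr j i
              have h4 : 0 ≤ r j := (hr j).le
              nlinarith
          _ = d * (C₁ * r i)^2 := by
              rw [Finset.sum_const, Finset.card_univ, Fintype.card_fin, nsmul_eq_mul]
      have h2 : Δ * R i = C₁ * r i := by rw [hΔdef, hRdef]; field_simp
      rw [h2, hsdef, hdQdef, cuboidDiam, div_le_iff₀ (by positivity)]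
      calc 2 * Real.sqrt (∑ j, (r j)^2) ≤ 2 * (Real.sqrt d * (C₁ * r i)) := by linarith
        _ = C₁ * r i * (2 * Real.sqrt d) := by ring
    set Qss := cuboid d z (fun i => κ^2 * r i) with hQss
    have hSmeas : MeasurableSet Qss := measurableSet_cuboid d z _
    have hMQ : besselMeasureD d ν Qss = ∏ i, Jm (2 * ν i + 1) (z i - R i) (z i + R i) :=
      besselMeasureD_cuboid d ν z (fun i => κ^2 * r i)
    have hMQtop : besselMeasureD d ν Qss ≠ ⊤ := by
      rw [hMQ]
      exact (ENNReal.prod_lt_top fun i _ => Jm_lt_top _ (hp i) _ _).ne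
    have hMQpos : 0 < besselMeasureD d ν Qss := by
      rw [hMQ]
      apply CanonicallyOrderedAdd.prod_pos.mpr
      intro i _
      calc (0:ℝ≥0∞) < ENNReal.ofReal (min 1 ((2:ℝ) ^ (-(2 * ν i + 1))) *
            (z i + R i) ^ (2 * ν i + 1) * (R i / 2)) := by
            apply ENNReal.ofReal_pos.mpr
            have h1 : (0:ℝ) < min 1 ((2:ℝ) ^ (-(2 * ν i + 1))) :=
              lt_min one_pos (Real.rpow_pos_of_pos two_pos _)
            have h2 : (0:ℝ) < (z i + R i) ^ (2 * ν i + 1) :=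
              Real.rpow_pos_of_pos (by have := hzpos i; have := hRpos i; linarith) _
            have := hRpos i
            positivity
        _ ≤ Jm (2 * ν i + 1) (z i - R i) (z i + R i) := Jm_lower (hzpos i).le (hRpos i)
    set M : ℝ := (besselMeasureD d ν Qss).toReal with hMdef
    have hMpos : 0 < M := ENNReal.toReal_pos hMQpos.ne' hMQtop
    -- a.e. positivity of coordinates
    have hae : ∀ᵐ x ∂(besselMeasureD d ν), ∀ i, 0 < x i := by
      rw [ae_iff]
      have hcompl : {x : EuclideanSpace ℝ (Fin d) | ¬ ∀ i, 0 < x i}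
          = {x : EuclideanSpace ℝ (Fin d) | ∀ i, 0 < x i}ᶜ := rfl
      rw [hcompl, besselMeasureD, withDensity_apply _ (measurableSet_orthant d).compl,
        Measure.restrict_restrict (measurableSet_orthant d).compl, Set.compl_inter_self,
        Measure.restrict_empty, lintegral_zero_measure]
    -- pointwise bound
    have hpt : ∀ x ∈ Qss, (∀ i, 0 < x i) →
        (⨆ (t : ℝ) (_ : dQ^2 < t), ENNReal.ofReal (T t x y)) ≤ ENNReal.ofReal (C * A / M) := by
      intro x hxQ hxP
      refine iSup₂_le fun t ht => ?_
      have htpos : 0 < t := lt_of_le_of_lt (sq_nonneg _) ht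
      obtain ⟨hT0, hTb⟩ := hT t htpos x hxQ y hy
      have hsqrt : dQ < Real.sqrt t := (Real.lt_sqrt hdQpos.le).mpr ht
      have hBt_top : besselMeasureD d ν (Metric.ball x (Real.sqrt t)) ≠ ⊤ := by
        have h1 : besselMeasureD d ν (Metric.ball x (Real.sqrt t))
            ≤ besselMeasureD d ν (cuboid d x (fun _ => Real.sqrt t)) :=
          measure_mono (ball_subset_cuboid x _)
        rw [besselMeasureD_cuboid] at h1
        exact (lt_of_le_of_lt h1 (ENNReal.prod_lt_top fun i _ => Jm_lt_top _ (hp i) _ _)).ne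
      have hBBt : besselMeasureD d ν (Metric.ball x dQ)
          ≤ besselMeasureD d ν (Metric.ball x (Real.sqrt t)) :=
        measure_mono (Metric.ball_subset_ball hsqrt.le)
      have hB_top : besselMeasureD d ν (Metric.ball x dQ) ≠ ⊤ := ne_top_of_le_ne_top hBt_top hBBt
      have hboxball : cuboid d x (fun _ => s) ⊆ Metric.ball x dQ := by
        apply cuboid_subset_ball x hspos.le
        rw [hsdef]
        rw [show Real.sqrt d * (dQ / (2 * Real.sqrt d)) = dQ / 2 by field_simp]
        linarith
      have hlow : besselMeasureD d ν Qss
          ≤ ENNReal.ofReal A * besselMeasureD d ν (Metric.ball x dQ) := by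
        rw [hMQ]
        calc ∏ i, Jm (2 * ν i + 1) (z i - R i) (z i + R i)
            ≤ ∏ i, (ENNReal.ofReal (Acoord (2 * ν i + 1) δ Δ) *
                Jm (2 * ν i + 1) (x i - s) (x i + s)) := by
              apply Finset.prod_le_prod'
              intro i _
              have hxi := hxQ i
              rw [abs_le] at hxi
              exact Jm_coord (hp i) hδ hΔ0 (hRpos i) (hzpos i).le (hxP i).le
                (by linarith [hxi.2]) (by linarith [hxi.1]) (hs1 i) (hs2 i)
          _ = (∏ i, ENNReal.ofReal (Acoord (2 * ν i + 1) δ Δ)) *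
                ∏ i, Jm (2 * ν i + 1) (x i - s) (x i + s) := Finset.prod_mul_distrib
          _ = ENNReal.ofReal A * ∏ i, Jm (2 * ν i + 1) (x i - s) (x i + s) := by
              rw [hAdef, ENNReal.ofReal_prod_of_nonneg
                (fun i _ => (Acoord_pos (hp i) hδ hΔ0).le)]
          _ ≤ ENNReal.ofReal A * besselMeasureD d ν (Metric.ball x dQ) := by
              apply mul_le_mul_right
              rw [← besselMeasureD_cuboid d ν x (fun _ => s)]
              exact measure_mono hboxball
      have h1 : M / A ≤ (besselMeasureD d ν (Metric.ball x dQ)).toReal := by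
        rw [div_le_iff₀ hApos]
        have h2 : M ≤ (ENNReal.ofReal A * besselMeasureD d ν (Metric.ball x dQ)).toReal := by
          rw [hMdef]
          exact ENNReal.toReal_mono (by
            exact ENNReal.mul_ne_top ENNReal.ofReal_ne_top hB_top) hlow
        rw [ENNReal.toReal_mul, ENNReal.toReal_ofReal hApos.le] at h2
        linarith
      have h2 : (besselMeasureD d ν (Metric.ball x dQ)).toReal
          ≤ (besselMeasureD d ν (Metric.ball x (Real.sqrt t))).toReal :=
        (ENNReal.toReal_le_toReal hB_top hBt_top).mpr hBBt
      have hMA : 0 < M / A := div_pos hMpos hApos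
      have hexp : Real.exp (-(dist x y)^2 / (c * t)) ≤ 1 := by
        rw [Real.exp_le_one_iff]
        apply div_nonpos_of_nonpos_of_nonneg (neg_nonpos.mpr (sq_nonneg _)) (by positivity)
      apply ENNReal.ofReal_le_ofReal
      have hinv : (besselMeasureD d ν (Metric.ball x (Real.sqrt t))).toReal⁻¹ ≤ (M / A)⁻¹ := by
        apply inv_anti₀ hMA
        linarith
      calc T t x y ≤ C * (besselMeasureD d ν (Metric.ball x (Real.sqrt t))).toReal⁻¹ *
            Real.exp (-(dist x y)^2 / (c * t)) := hTb
        _ ≤ C * (besselMeasureD d ν (Metric.ball x (Real.sqrt t))).toReal⁻¹ * 1 := by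
            apply mul_le_mul_of_nonneg_left hexp
            exact mul_nonneg hC.le (inv_nonneg.mpr ENNReal.toReal_nonneg)
        _ = C * (besselMeasureD d ν (Metric.ball x (Real.sqrt t))).toReal⁻¹ := mul_one _
        _ ≤ C * (M / A)⁻¹ := mul_le_mul_of_nonneg_left hinv hC.le
        _ = C * A / M := by rw [inv_div]; ring
    calc (∫⁻ x in Qss, ⨆ (t : ℝ) (_ : dQ^2 < t), ENNReal.ofReal (T t x y) ∂(besselMeasureD d ν))
        ≤ ∫⁻ _x in Qss, ENNReal.ofReal (C * A / M) ∂(besselMeasureD d ν) := by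
          apply lintegral_mono_ae
          filter_upwards [ae_restrict_mem hSmeas, ae_restrict_of_ae hae] with x hx hxP
          exact hpt x hx hxP
      _ = ENNReal.ofReal (C * A / M) * besselMeasureD d ν Qss := setLIntegral_const _ _
      _ = ENNReal.ofReal (C * A / M) * ENNReal.ofReal M := by
          rw [hMdef, ENNReal.ofReal_toReal hMQtop]
      _ = ENNReal.ofReal (C * A / M * M) := (ENNReal.ofReal_mul (by positivity)).symm
      _ = ENNReal.ofReal (C * A) := by rw [div_mul_cancel₀ _ hMpos.ne']
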